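/- Let K be a finite abstract simplicial complex, f₀ an injective real-valued function on the vertices of K, and ε > 0. Then there exists a discrete Morse function f : K → ℝ such that: (a) the gradient vector field induced by f is exactly {(r(σ), σ) : σ is a left-right parent of K}; (b) f agrees with f₀ on the vertices of K; and (c) for every simplex σ ∈ K, |f(σ) − max_{v ∈ σ} f₀(v)| ≤ ε. -/

import Mathlib

open Finset

attribute [local instance] Classical.propDecidable

/-- A finite abstract simplicial complex: a finite family of nonempty finite sets
(simplices) closed under taking nonempty subsets. -/
def IsComplex {V : Type*} [DecidableEq V] (K : Finset (Finset V)) : Prop :=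
  (∀ σ ∈ K, σ.Nonempty) ∧ ∀ σ ∈ K, ∀ τ : Finset V, τ ⊆ σ → τ.Nonempty → τ ∈ K

/-- A discrete Morse function: for every simplex `σ ∈ K`, at most one coface `β ⊋ σ`
has `f β ≤ f σ`, and at most one face `γ ⊊ σ` has `f γ ≥ f σ`. -/
def IsDMF {V : Type*} [DecidableEq V] (K : Finset (Finset V)) (f : Finset V → ℝ) : Prop :=
  ∀ σ ∈ K,
    (K.filter fun β => σ ⊂ β ∧ f β ≤ f σ).card ≤ 1 ∧
    (K.filter fun γ => γ ⊂ σ ∧ f σ ≤ f γ).card ≤ 1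

/-- A simplex is critical if both counts in the Morse condition are zero. -/
def IsCritical {V : Type*} [DecidableEq V] (K : Finset (Finset V)) (f : Finset V → ℝ)
    (σ : Finset V) : Prop :=
  (K.filter fun β => σ ⊂ β ∧ f β ≤ f σ).card = 0 ∧
  (K.filter fun γ => γ ⊂ σ ∧ f σ ≤ f γ).card = 0

/-- The decreasing list of `f0`-values of the vertices of a simplex. -/
noncomputable def descList {V : Type*} [DecidableEq V] (f0 : V → ℝ) (σ : Finset V) :
    List ℝ :=
  ((σ.image f0).sort (· ≤ ·)).reverse

/-- Lexicographic comparison of simplices: compare the decreasing sequences of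
`f0`-values of their vertices lexicographically. -/
noncomputable def lexLt {V : Type*} [DecidableEq V] (f0 : V → ℝ) (σ τ : Finset V) : Prop :=
  List.Lex (· < ·) (descList f0 σ) (descList f0 τ)

/-- `τ` is the rightmost face of `σ`: the codimension-one face of `σ` of maximum
lexicographic value. -/
noncomputable def IsRChild {V : Type*} [DecidableEq V] (K : Finset (Finset V)) (f0 : V → ℝ)
    (σ τ : Finset V) : Prop :=
  τ ∈ K ∧ τ ⊂ σ ∧ τ.card + 1 = σ.card ∧
    ∀ τ' ∈ K, τ' ⊂ σ → τ'.card + 1 = σ.card → τ' = τ ∨ lexLt f0 τ' τ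

/-- `σ` is the leftmost coface of `τ`: the codimension-one coface of `τ` of minimum
lexicographic value. -/
noncomputable def IsLParent {V : Type*} [DecidableEq V] (K : Finset (Finset V)) (f0 : V → ℝ)
    (τ σ : Finset V) : Prop :=
  σ ∈ K ∧ τ ⊂ σ ∧ τ.card + 1 = σ.card ∧
    ∀ σ' ∈ K, τ ⊂ σ' → τ.card + 1 = σ'.card → σ' = σ ∨ lexLt f0 σ σ'

/-- The rightmost face of `σ` (an arbitrary default if none exists). -/
noncomputable def rchild {V : Type*} [DecidableEq V] (K : Finset (Finset V)) (f0 : V → ℝ)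
    (σ : Finset V) : Finset V :=
  if h : ∃ τ, IsRChild K f0 σ τ then h.choose else ∅

/-- `σ` is a left-right parent: the leftmost coface of its rightmost face is `σ` itself,
i.e. `ℓ(r(σ)) = σ`. -/
noncomputable def LeftRightParent {V : Type*} [DecidableEq V] (K : Finset (Finset V))
    (f0 : V → ℝ) (σ : Finset V) : Prop :=
  (∃ τ, IsRChild K f0 σ τ) ∧ IsLParent K f0 (rchild K f0 σ) σ

/-- The maximum `f0`-value over the vertices of a simplex. -/
noncomputable def maxVal {V : Type*} [DecidableEq V] (f0 : V → ℝ) (σ : Finset V) : ℝ :=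
  if h : σ.Nonempty then σ.sup' h f0 else 0

set_option linter.unusedSectionVars false
set_option maxHeartbeats 1000000

/-- descending sort of a finset of reals -/
noncomputable def dsc (S : Finset ℝ) : List ℝ := (S.sort (· ≤ ·)).reverse

lemma dsc_insert_top {S : Finset ℝ} {x : ℝ} (hx : ∀ y ∈ S, y < x) :
    dsc (insert x S) = x :: dsc S := by
  have hxS : x ∉ S := fun h => lt_irrefl x (hx x h)
  have hsorted : List.Pairwise (· ≤ ·) (S.sort (· ≤ ·) ++ [x]) := by
    rw [List.pairwise_append]
    refine ⟨Finset.pairwise_sort _ _, List.pairwise_singleton _ _, ?_⟩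
    intro y hy z hz
    simp only [List.mem_singleton] at hz
    subst hz
    exact le_of_lt (hx y ((Finset.mem_sort _).1 hy))
  have hperm : ((insert x S).sort (· ≤ ·)).Perm (S.sort (· ≤ ·) ++ [x]) := by
    refine ((Finset.sort_perm_toList _ _).trans ?_).trans
      (List.perm_append_singleton _ _).symm
    exact (Finset.toList_insert hxS).trans ((Finset.sort_perm_toList S _).symm.cons x)
  have : (insert x S).sort (· ≤ ·) = S.sort (· ≤ ·) ++ [x] :=
    List.Perm.eq_of_pairwise' (Finset.pairwise_sort _ _) hsorted hperm
  simp [dsc, this]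

lemma dsc_lex_aux : ∀ (n : ℕ) (A : Finset ℝ), A.card = n → ∀ a b : ℝ, a ∉ A → b ∉ A → a < b →
    List.Lex (· < ·) (dsc (insert a A)) (dsc (insert b A)) := by
  intro n
  induction n using Nat.strong_induction_on with
  | _ n IH =>
    intro A hcard a b ha hb hab
    by_cases hA : ∃ M ∈ A, b < M
    · obtain ⟨M0, hM0, hbM0⟩ := hA
      have hne : A.Nonempty := ⟨M0, hM0⟩
      set M := A.max' hne with hM
      have hMA : M ∈ A := A.max'_mem hne
      have hbM : b < M := lt_of_lt_of_le hbM0 (A.le_max' M0 hM0)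
      have haM : a < M := hab.trans hbM
      have hlt : ∀ y ∈ A.erase M, y < M := fun y hy =>
        lt_of_le_of_ne (A.le_max' y (Finset.mem_of_mem_erase hy)) (Finset.ne_of_mem_erase hy)
      have hins : ∀ c : ℝ, c < M → c ∉ A → insert c A = insert M (insert c (A.erase M)) := by
        intro c hc hcA
        rw [Finset.insert_comm, Finset.insert_erase hMA]
      have hd : ∀ c : ℝ, c < M → c ∉ A →
          dsc (insert c A) = M :: dsc (insert c (A.erase M)) := by
        intro c hc hcA
        rw [hins c hc hcA]
        exact dsc_insert_top (by
          intro y hy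
          rcases Finset.mem_insert.1 hy with rfl | hy
          · exact hc
          · exact hlt y hy)
      rw [hd a haM ha, hd b hbM hb]
      refine List.Lex.cons ?_
      have hcardlt : (A.erase M).card < n := by
        rw [Finset.card_erase_of_mem hMA, ← hcard]
        exact Nat.sub_lt (Finset.card_pos.2 hne) one_pos
      exact IH _ hcardlt _ rfl a b (fun h => ha (Finset.mem_of_mem_erase h))
        (fun h => hb (Finset.mem_of_mem_erase h)) hab
    · push_neg at hA
      have hAb : ∀ y ∈ A, y < b := fun y hy => lt_of_le_of_ne (hA y hy) (fun h => hb (h ▸ hy))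
      rw [dsc_insert_top hAb]
      have hne : (insert a A).Nonempty := ⟨a, Finset.mem_insert_self _ _⟩
      set N := (insert a A).max' hne with hN
      have hNmem : N ∈ insert a A := Finset.max'_mem _ hne
      have hNb : N < b := by
        rcases Finset.mem_insert.1 hNmem with h | h
        · rw [h]; exact hab
        · exact hAb N h
      have : dsc (insert a A) = N :: dsc ((insert a A).erase N) := by
        conv_lhs => rw [← Finset.insert_erase hNmem]
        exact dsc_insert_top (fun y hy =>
          lt_of_le_of_ne (Finset.le_max' _ y (Finset.mem_of_mem_erase hy))
            (Finset.ne_of_mem_erase hy))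
      rw [this]
      exact List.Lex.rel hNb

lemma dsc_lex {A : Finset ℝ} {a b : ℝ} (ha : a ∉ A) (hb : b ∉ A) (hab : a < b) :
    List.Lex (· < ·) (dsc (insert a A)) (dsc (insert b A)) :=
  dsc_lex_aux A.card A rfl a b ha hb hab


section Main

variable {V : Type*} [DecidableEq V]

/-- witness for τ being a matched child: a is the minimal addable vertex and below min τ -/
def ChildWit (K : Finset (Finset V)) (f0 : V → ℝ) (τ : Finset V) (a : V) : Prop :=
  a ∉ τ ∧ insert a τ ∈ K ∧ (∀ x, x ∉ τ → insert x τ ∈ K → f0 a ≤ f0 x) ∧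
    (∀ y ∈ τ, f0 a < f0 y)

def IsChild (K : Finset (Finset V)) (f0 : V → ℝ) (τ : Finset V) : Prop :=
  τ ∈ K ∧ ∃ a, ChildWit K f0 τ a

noncomputable def parOf (K : Finset (Finset V)) (f0 : V → ℝ) (τ : Finset V) : Finset V :=
  if h : ∃ a, ChildWit K f0 τ a then insert h.choose τ else ∅

def IsParent (K : Finset (Finset V)) (f0 : V → ℝ) (σ : Finset V) : Prop :=
  ∃ τ, IsChild K f0 τ ∧ σ = parOf K f0 τ

noncomputable def childOf (f0 : V → ℝ) (P : Finset V) : Finset V :=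
  P.filter fun x => ∃ y ∈ P, f0 y < f0 x

variable {K : Finset (Finset V)} {f0 : V → ℝ}

lemma singleton_mem (hK : IsComplex K) {σ : Finset V} (hσ : σ ∈ K) {v : V} (hv : v ∈ σ) :
    {v} ∈ K :=
  hK.2 σ hσ {v} (Finset.singleton_subset_iff.2 hv) ⟨v, Finset.mem_singleton_self v⟩

lemma inj' (hinj : Set.InjOn f0 {v : V | {v} ∈ K}) {u w : V} (hu : {u} ∈ K) (hw : {w} ∈ K)
    (h : f0 u = f0 w) : u = w :=
  hinj hu hw h

lemma descList_eq (σ : Finset V) : descList f0 σ = dsc (σ.image f0) := rfl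

lemma lex_insert (hinj : Set.InjOn f0 {v : V | {v} ∈ K}) {ρ : Finset V} {u w : V}
    (hρ : ∀ x ∈ ρ, {x} ∈ K) (hu : {u} ∈ K) (hw : {w} ∈ K)
    (hu' : u ∉ ρ) (hw' : w ∉ ρ) (h : f0 u < f0 w) :
    lexLt f0 (insert u ρ) (insert w ρ) := by
  unfold lexLt
  rw [descList_eq, descList_eq, Finset.image_insert, Finset.image_insert]
  apply dsc_lex _ _ h
  · intro hmem
    obtain ⟨y, hy, hyeq⟩ := Finset.mem_image.1 hmem
    exact hu' (inj' hinj (hρ y hy) hu hyeq ▸ hy)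
  · intro hmem
    obtain ⟨y, hy, hyeq⟩ := Finset.mem_image.1 hmem
    exact hw' (inj' hinj (hρ y hy) hw hyeq ▸ hy)

lemma lex_asymm {σ τ : Finset V} (h : lexLt f0 σ τ) (h' : lexLt f0 τ σ) : False :=
  (List.Lex.asymm (· < ·)).asymm _ _ h h'

lemma face_rep {τ σ : Finset V} (hss : τ ⊂ σ) (hc : τ.card + 1 = σ.card) :
    ∃ u ∈ σ, u ∉ τ ∧ τ = σ.erase u := by
  obtain ⟨u, hu, hu'⟩ := Finset.exists_of_ssubset hss
  refine ⟨u, hu, hu', ?_⟩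
  apply Finset.eq_of_subset_of_card_le
  · intro y hy
    exact Finset.mem_erase.2 ⟨fun h => hu' (h ▸ hy), hss.1 hy⟩
  · rw [Finset.card_erase_of_mem hu]
    omega

lemma coface_rep {τ σ' : Finset V} (hss : τ ⊂ σ') (hc : τ.card + 1 = σ'.card) :
    ∃ u, u ∉ τ ∧ σ' = insert u τ := by
  obtain ⟨u, hu, hu', he⟩ := face_rep hss hc
  exact ⟨u, hu', by rw [he, Finset.insert_erase hu]⟩

lemma isRChild_erase (hK : IsComplex K) (hinj : Set.InjOn f0 {v : V | {v} ∈ K})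
    {σ : Finset V} (hσ : σ ∈ K) (hc : 2 ≤ σ.card) {m : V} (hm : m ∈ σ)
    (hmin : ∀ y ∈ σ, f0 m ≤ f0 y) : IsRChild K f0 σ (σ.erase m) := by
  have hcard : (σ.erase m).card + 1 = σ.card := by
    rw [Finset.card_erase_of_mem hm]; omega
  have hne : (σ.erase m).Nonempty := Finset.card_pos.1 (by omega)
  have hmem : σ.erase m ∈ K := hK.2 σ hσ _ (Finset.erase_subset m σ) hne
  refine ⟨hmem, Finset.erase_ssubset hm, hcard, ?_⟩
  intro τ' hτ' hss hcard'
  obtain ⟨u, hu, hu', he⟩ := face_rep hss hcard'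
  by_cases hum : u = m
  · left; rw [he, hum]
  · right
    have hfm : f0 m < f0 u := lt_of_le_of_ne (hmin u hu)
      (fun h => hum (inj' hinj (singleton_mem hK hσ hm) (singleton_mem hK hσ hu) h).symm)
    have hmu' : m ≠ u := fun h => hum h.symm
    have h1 : σ.erase u = insert m ((σ.erase u).erase m) :=
      (Finset.insert_erase (Finset.mem_erase.2 ⟨hmu', hm⟩)).symm
    have hcomm : (σ.erase u).erase m = (σ.erase m).erase u := by
      rw [Finset.erase_right_comm]
    have h2 : σ.erase m = insert u ((σ.erase u).erase m) := by
      rw [hcomm, Finset.insert_erase (Finset.mem_erase.2 ⟨hum, hu⟩)]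
    rw [he, h1, h2]
    apply lex_insert hinj
    · intro x hx
      exact singleton_mem hK hσ (Finset.mem_of_mem_erase (Finset.mem_of_mem_erase hx))
    · exact singleton_mem hK hσ hm
    · exact singleton_mem hK hσ hu
    · exact fun h => (Finset.mem_erase.1 h).1 rfl
    · rw [hcomm]; exact fun h => (Finset.mem_erase.1 h).1 rfl
    · exact hfm

lemma isRChild_unique {σ τ τ' : Finset V} (h : IsRChild K f0 σ τ) (h' : IsRChild K f0 σ τ') :
    τ = τ' := by
  rcases h'.2.2.2 τ h.1 h.2.1 h.2.2.1 with he | hl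
  · exact he
  · rcases h.2.2.2 τ' h'.1 h'.2.1 h'.2.2.1 with he | hl'
    · exact he.symm
    · exact absurd hl (fun hh => lex_asymm hh hl')

lemma rchild_eq {σ τ : Finset V} (h : IsRChild K f0 σ τ) : rchild K f0 σ = τ := by
  have hex : ∃ τ, IsRChild K f0 σ τ := ⟨τ, h⟩
  rw [rchild, dif_pos hex]
  exact isRChild_unique hex.choose_spec h

lemma exists_rchild_iff (hK : IsComplex K) (hinj : Set.InjOn f0 {v : V | {v} ∈ K})
    {σ : Finset V} (hσ : σ ∈ K) : (∃ τ, IsRChild K f0 σ τ) ↔ 2 ≤ σ.card := by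
  constructor
  · rintro ⟨τ, hτ⟩
    have h1 := Finset.card_pos.2 (hK.1 τ hτ.1)
    have h2 := hτ.2.2.1
    omega
  · intro hc
    obtain ⟨m, hm, hmin⟩ := Finset.exists_min_image σ f0 (hK.1 σ hσ)
    exact ⟨σ.erase m, isRChild_erase hK hinj hσ hc hm hmin⟩

lemma isLParent_insert (hK : IsComplex K) (hinj : Set.InjOn f0 {v : V | {v} ∈ K})
    {τ : Finset V} (hτ : τ ∈ K) {a : V} (ha : a ∉ τ) (haK : insert a τ ∈ K)
    (hamin : ∀ x, x ∉ τ → insert x τ ∈ K → f0 a ≤ f0 x) :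
    IsLParent K f0 τ (insert a τ) := by
  refine ⟨haK, Finset.ssubset_insert ha, (Finset.card_insert_of_notMem ha).symm, ?_⟩
  intro σ' hσ' hss hcard
  obtain ⟨u, hu, he⟩ := coface_rep hss hcard
  by_cases hua : u = a
  · left; rw [he, hua]
  · right
    have hua' : f0 a < f0 u := lt_of_le_of_ne (hamin u hu (he ▸ hσ'))
      (fun h => hua (inj' hinj (singleton_mem hK haK (Finset.mem_insert_self a τ))
        (singleton_mem hK hσ' (he ▸ Finset.mem_insert_self u τ)) h).symm)
    rw [he]
    apply lex_insert hinj
    · intro x hx; exact singleton_mem hK hτ hx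
    · exact singleton_mem hK haK (Finset.mem_insert_self a τ)
    · exact singleton_mem hK hσ' (he ▸ Finset.mem_insert_self u τ)
    · exact ha
    · exact hu
    · exact hua'

lemma isLParent_min (hK : IsComplex K) (hinj : Set.InjOn f0 {v : V | {v} ∈ K})
    {τ σ : Finset V} (hτ : τ ∈ K) (hlp : IsLParent K f0 τ σ) :
    ∃ a, a ∉ τ ∧ σ = insert a τ ∧ ∀ x, x ∉ τ → insert x τ ∈ K → f0 a ≤ f0 x := by
  obtain ⟨a, ha, he⟩ := coface_rep hlp.2.1 hlp.2.2.1
  refine ⟨a, ha, he, ?_⟩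
  intro x hx hxK
  rcases hlp.2.2.2 (insert x τ) hxK (Finset.ssubset_insert hx)
      (Finset.card_insert_of_notMem hx).symm with heq | hl
  · have : x ∈ insert a τ := by rw [← he, ← heq]; exact Finset.mem_insert_self x τ
    rcases Finset.mem_insert.1 this with h | h
    · exact le_of_eq (by rw [h])
    · exact absurd h hx
  · by_contra hlt
    push_neg at hlt
    have : lexLt f0 (insert x τ) σ := by
      rw [he]
      apply lex_insert hinj (fun y hy => singleton_mem hK hτ hy)
        (singleton_mem hK hxK (Finset.mem_insert_self x τ))
        (singleton_mem hK (he ▸ hlp.1) (Finset.mem_insert_self a τ)) hx ha hlt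
    exact lex_asymm this hl

lemma childWit_unique (hK : IsComplex K) (hinj : Set.InjOn f0 {v : V | {v} ∈ K})
    {τ : Finset V} {a b : V} (ha : ChildWit K f0 τ a) (hb : ChildWit K f0 τ b) : a = b := by
  have h1 : f0 a ≤ f0 b := ha.2.2.1 b hb.1 hb.2.1
  have h2 : f0 b ≤ f0 a := hb.2.2.1 a ha.1 ha.2.1
  exact inj' hinj (singleton_mem hK ha.2.1 (Finset.mem_insert_self a τ))
    (singleton_mem hK hb.2.1 (Finset.mem_insert_self b τ)) (le_antisymm h1 h2)

lemma parOf_eq (hK : IsComplex K) (hinj : Set.InjOn f0 {v : V | {v} ∈ K})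
    {τ : Finset V} {a : V} (ha : ChildWit K f0 τ a) : parOf K f0 τ = insert a τ := by
  have hex : ∃ a, ChildWit K f0 τ a := ⟨a, ha⟩
  rw [parOf, dif_pos hex, childWit_unique hK hinj hex.choose_spec ha]

lemma parOf_mem (hK : IsComplex K) (hinj : Set.InjOn f0 {v : V | {v} ∈ K})
    {τ : Finset V} (h : IsChild K f0 τ) : parOf K f0 τ ∈ K := by
  obtain ⟨hτ, a, ha⟩ := h
  rw [parOf_eq hK hinj ha]
  exact ha.2.1

lemma childOf_insert (hK : IsComplex K) (hinj : Set.InjOn f0 {v : V | {v} ∈ K})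
    {τ : Finset V} {a : V} (hτ : τ ∈ K) (ha : ChildWit K f0 τ a) :
    childOf f0 (insert a τ) = τ := by
  ext x
  simp only [childOf, Finset.mem_filter, Finset.mem_insert]
  constructor
  · rintro ⟨h1 | h1, y, hy, hxy⟩
    · subst h1
      rcases hy with h2 | h2
      · exact absurd hxy (by rw [h2]; exact lt_irrefl _)
      · exact absurd hxy (not_lt.2 (le_of_lt (ha.2.2.2 y h2)))
    · exact h1
  · intro hx
    exact ⟨Or.inr hx, a, Or.inl rfl, ha.2.2.2 x hx⟩

lemma child_not_parent (hK : IsComplex K) (hinj : Set.InjOn f0 {v : V | {v} ∈ K})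
    {τ : Finset V} (h : IsChild K f0 τ) : ¬ IsParent K f0 τ := by
  rintro ⟨χ, hχ, he⟩
  obtain ⟨hχK, c, hc⟩ := hχ
  rw [parOf_eq hK hinj hc] at he
  obtain ⟨hτK, a, ha⟩ := h
  -- a is below everything in τ = insert c χ, in particular f0 a < f0 c
  have hcτ : c ∈ τ := he ▸ Finset.mem_insert_self c χ
  have hac : f0 a < f0 c := ha.2.2.2 c hcτ
  -- a is addable to χ
  have haχ : a ∉ χ := fun hh => ha.1 (he ▸ Finset.mem_insert_of_mem hh)
  have haχK : insert a χ ∈ K := by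
    apply hK.2 (insert a τ) ha.2.1 _ _ ⟨a, Finset.mem_insert_self a χ⟩
    intro y hy
    rcases Finset.mem_insert.1 hy with h1 | h1
    · exact h1 ▸ Finset.mem_insert_self a τ
    · exact Finset.mem_insert_of_mem (he ▸ Finset.mem_insert_of_mem h1)
  exact absurd (hc.2.2.1 a haχ haχK) (not_le.2 hac)

/-- The bridge: left-right parenthood in terms of the concrete matching. -/
lemma bridge (hK : IsComplex K) (hinj : Set.InjOn f0 {v : V | {v} ∈ K})
    {τ σ : Finset V} (hτ : τ ∈ K) (hσ : σ ∈ K) :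
    (LeftRightParent K f0 σ ∧ τ = rchild K f0 σ) ↔ (IsChild K f0 τ ∧ σ = parOf K f0 τ) := by
  constructor
  · rintro ⟨⟨hex, hlp⟩, hrc⟩
    have hc2 : 2 ≤ σ.card := (exists_rchild_iff hK hinj hσ).1 hex
    obtain ⟨m, hm, hmin⟩ := Finset.exists_min_image σ f0 (hK.1 σ hσ)
    have hrc' : IsRChild K f0 σ (σ.erase m) := isRChild_erase hK hinj hσ hc2 hm hmin
    have hτe : τ = σ.erase m := by rw [hrc, rchild_eq hrc']
    have hσe : σ = insert m τ := by rw [hτe, Finset.insert_erase hm]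
    rw [← hrc] at hlp
    obtain ⟨a, haτ, hae, hamin⟩ := isLParent_min hK hinj (hτe ▸ hrc'.1) hlp
    have ham : a = m := by
      have : m ∈ insert a τ := by rw [← hae, hσe]; exact Finset.mem_insert_self m τ
      rcases Finset.mem_insert.1 this with h1 | h1
      · exact h1.symm
      · exact absurd h1 (hτe ▸ fun hh => (Finset.mem_erase.1 hh).1 rfl)
    subst ham
    have hwit : ChildWit K f0 τ a := by
      refine ⟨haτ, hae ▸ hσ, hamin, ?_⟩
      intro y hy
      have hy' : y ∈ σ := hσe ▸ Finset.mem_insert_of_mem hy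
      refine lt_of_le_of_ne (hmin y hy') (fun hh => ?_)
      have : a = y := inj' hinj (singleton_mem hK hσ hm) (singleton_mem hK hσ hy') hh
      rw [hτe] at hy
      exact (Finset.mem_erase.1 hy).1 this.symm
    exact ⟨⟨hτe ▸ hrc'.1, a, hwit⟩, by rw [parOf_eq hK hinj hwit, hae]⟩
  · rintro ⟨⟨hτK, a, ha⟩, hpe⟩
    rw [parOf_eq hK hinj ha] at hpe
    have hmins : ∀ y ∈ σ, f0 a ≤ f0 y := by
      intro y hy
      rcases Finset.mem_insert.1 (hpe ▸ hy) with h1 | h1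
      · exact le_of_eq (by rw [h1])
      · exact le_of_lt (ha.2.2.2 y h1)
    have hma : a ∈ σ := hpe ▸ Finset.mem_insert_self a τ
    have hc2 : 2 ≤ σ.card := by
      have := Finset.card_pos.2 (hK.1 τ hτK)
      have h2 : σ.card = τ.card + 1 := by rw [hpe, Finset.card_insert_of_notMem ha.1]
      omega
    have hrc' : IsRChild K f0 σ (σ.erase a) := isRChild_erase hK hinj hσ hc2 hma hmins
    have hτe : σ.erase a = τ := by rw [hpe, Finset.erase_insert ha.1]
    rw [hτe] at hrc'
    have hre : rchild K f0 σ = τ := rchild_eq hrc'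
    refine ⟨⟨⟨τ, hrc'⟩, ?_⟩, hre.symm⟩
    rw [hre, hpe]
    exact isLParent_insert hK hinj hτK ha.1 (hpe ▸ hσ) ha.2.2.1

/-! ### Numeric part -/

noncomputable def valsK (K : Finset (Finset V)) (f0 : V → ℝ) : Finset ℝ :=
  (K.biUnion id).image f0

noncomputable def mm (K : Finset (Finset V)) (f0 : V → ℝ) : ℕ := (valsK K f0).card

noncomputable def uu (K : Finset (Finset V)) (f0 : V → ℝ) (x : ℝ) : ℝ :=
  (((valsK K f0).filter (fun y => y < x)).card : ℝ) / (mm K f0 + 1)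

noncomputable def ss (K : Finset (Finset V)) (f0 : V → ℝ) : ℝ := 1 / (2 * (mm K f0 + 1))

noncomputable def minval (f0 : V → ℝ) (σ : Finset V) : ℝ :=
  if h : (σ.image f0).Nonempty then (σ.image f0).min' h else 0

noncomputable def ww (K : Finset (Finset V)) (f0 : V → ℝ) (σ : Finset V) : ℝ :=
  if IsParent K f0 σ then
    2 * (σ.card : ℝ) - 2 + uu K f0 (minval f0 (childOf f0 σ)) - ss K f0
  else 2 * (σ.card : ℝ) + uu K f0 (minval f0 σ)

lemma uu_nonneg (x : ℝ) : 0 ≤ uu K f0 x := by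
  apply div_nonneg (Nat.cast_nonneg _)
  positivity

lemma uu_lt_one (x : ℝ) : uu K f0 x < 1 := by
  rw [uu, div_lt_one (by positivity)]
  have h := Finset.card_filter_le (valsK K f0) (fun y => y < x)
  calc ((((valsK K f0).filter (fun y => y < x)).card : ℝ)) ≤ (mm K f0 : ℝ) := by
        exact_mod_cast h
    _ < (mm K f0 : ℝ) + 1 := by linarith

lemma ss_pos : 0 < ss K f0 := by rw [ss]; positivity

lemma ss_lt_one : ss K f0 < 1 := by
  rw [ss]
  rw [div_lt_one (by positivity)]
  have : (0:ℝ) ≤ (mm K f0 : ℝ) := Nat.cast_nonneg _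
  linarith

lemma uu_gap {x y : ℝ} (hx : x ∈ valsK K f0) (hy : y ∈ valsK K f0) (hxy : x < y) :
    uu K f0 x + 2 * ss K f0 ≤ uu K f0 y := by
  have hsub : insert x ((valsK K f0).filter (fun z => z < x)) ⊆
      (valsK K f0).filter (fun z => z < y) := by
    intro z hz
    rcases Finset.mem_insert.1 hz with h | h
    · exact Finset.mem_filter.2 ⟨h ▸ hx, h ▸ hxy⟩
    · obtain ⟨hz1, hz2⟩ := Finset.mem_filter.1 h
      exact Finset.mem_filter.2 ⟨hz1, hz2.trans hxy⟩
  have hxnot : x ∉ (valsK K f0).filter (fun z => z < x) := by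
    intro h
    exact lt_irrefl x (Finset.mem_filter.1 h).2
  have hcard : ((valsK K f0).filter (fun z => z < x)).card + 1 ≤
      ((valsK K f0).filter (fun z => z < y)).card := by
    rw [← Finset.card_insert_of_notMem hxnot]
    exact Finset.card_le_card hsub
  have hm : (0:ℝ) < (mm K f0 : ℝ) + 1 := by positivity
  rw [uu, uu, ss]
  have hc : ((((valsK K f0).filter (fun z => z < x)).card : ℝ)) + 1 ≤
      ((((valsK K f0).filter (fun z => z < y)).card : ℝ)) := by exact_mod_cast hcard
  have h2 : 2 * (1 / (2 * ((mm K f0 : ℝ) + 1))) = 1 / ((mm K f0 : ℝ) + 1) := by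
    field_simp
  rw [h2, ← add_div]
  exact div_le_div_of_nonneg_right hc hm.le
lemma vert_subset {σ : Finset V} (hσ : σ ∈ K) : σ ⊆ K.biUnion id := fun v hv =>
  Finset.mem_biUnion.2 ⟨σ, hσ, hv⟩

lemma f0_mem_vals {σ : Finset V} (hσ : σ ∈ K) {v : V} (hv : v ∈ σ) : f0 v ∈ valsK K f0 :=
  Finset.mem_image.2 ⟨v, vert_subset hσ hv, rfl⟩

lemma minval_eq (hK : IsComplex K) {σ : Finset V} (hσ : σ ∈ K) {m : V} (hm : m ∈ σ)
    (hmin : ∀ y ∈ σ, f0 m ≤ f0 y) : minval f0 σ = f0 m := by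
  have hne : (σ.image f0).Nonempty := ⟨f0 m, Finset.mem_image_of_mem f0 hm⟩
  rw [minval, dif_pos hne]
  apply le_antisymm
  · exact Finset.min'_le _ _ (Finset.mem_image_of_mem f0 hm)
  · obtain ⟨y, hy, he⟩ := Finset.mem_image.1 ((σ.image f0).min'_mem hne)
    rw [← he]
    exact hmin y hy

lemma minval_spec (hK : IsComplex K) {σ : Finset V} (hσ : σ ∈ K) :
    ∃ m ∈ σ, minval f0 σ = f0 m ∧ ∀ y ∈ σ, f0 m ≤ f0 y := by
  obtain ⟨m, hm, hmin⟩ := Finset.exists_min_image σ f0 (hK.1 σ hσ)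
  exact ⟨m, hm, minval_eq hK hσ hm hmin, hmin⟩

lemma minval_mem_vals (hK : IsComplex K) {σ : Finset V} (hσ : σ ∈ K) :
    minval f0 σ ∈ valsK K f0 := by
  obtain ⟨m, hm, he, _⟩ := minval_spec hK hσ
  rw [he]
  exact f0_mem_vals hσ hm

lemma maxVal_spec (hK : IsComplex K) {σ : Finset V} (hσ : σ ∈ K) :
    (∃ m ∈ σ, maxVal f0 σ = f0 m) ∧ ∀ y ∈ σ, f0 y ≤ maxVal f0 σ := by
  have hne := hK.1 σ hσ
  rw [maxVal, dif_pos hne]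
  constructor
  · obtain ⟨m, hm, he⟩ := Finset.exists_mem_eq_sup' hne f0
    exact ⟨m, hm, he⟩
  · exact fun y hy => Finset.le_sup' f0 hy

lemma maxVal_mem_vals (hK : IsComplex K) {σ : Finset V} (hσ : σ ∈ K) :
    maxVal f0 σ ∈ valsK K f0 := by
  obtain ⟨⟨m, hm, he⟩, _⟩ := maxVal_spec hK hσ
  rw [he]
  exact f0_mem_vals hσ hm

lemma maxVal_mono (hK : IsComplex K) {σ β : Finset V} (hσ : σ ∈ K) (hβ : β ∈ K)
    (hss : σ ⊆ β) : maxVal f0 σ ≤ maxVal f0 β := by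
  obtain ⟨⟨m, hm, he⟩, _⟩ := maxVal_spec hK hσ
  rw [he]
  exact (maxVal_spec hK hβ).2 m (hss hm)

lemma ww_lt (hK : IsComplex K) (hinj : Set.InjOn f0 {v : V | {v} ∈ K})
    {σ β : Finset V} (hσ : σ ∈ K) (hβ : β ∈ K) (hsub : σ ⊂ β)
    (hnm : ¬(IsChild K f0 σ ∧ β = parOf K f0 σ)) : ww K f0 σ < ww K f0 β := by
  have hclt : σ.card < β.card := Finset.card_lt_card hsub
  have hc : (σ.card : ℝ) + 1 ≤ (β.card : ℝ) := by exact_mod_cast hclt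
  have hs1 := ss_pos (K := K) (f0 := f0)
  have hs2 := ss_lt_one (K := K) (f0 := f0)
  by_cases hPσ : IsParent K f0 σ <;> by_cases hPβ : IsParent K f0 β
  · rw [ww, ww, if_pos hPσ, if_pos hPβ]
    have h1 := uu_lt_one (K := K) (f0 := f0) (minval f0 (childOf f0 σ))
    have h2 := uu_nonneg (K := K) (f0 := f0) (minval f0 (childOf f0 β))
    linarith
  · rw [ww, ww, if_pos hPσ, if_neg hPβ]
    have h1 := uu_lt_one (K := K) (f0 := f0) (minval f0 (childOf f0 σ))
    have h2 := uu_nonneg (K := K) (f0 := f0) (minval f0 β)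
    linarith
  · -- the interesting case: σ is not a parent, β is a parent
    rw [ww, ww, if_neg hPσ, if_pos hPβ]
    by_cases hco : σ.card + 2 ≤ β.card
    · have hc2 : (σ.card : ℝ) + 2 ≤ (β.card : ℝ) := by exact_mod_cast hco
      have h1 := uu_lt_one (K := K) (f0 := f0) (minval f0 σ)
      have h2 := uu_nonneg (K := K) (f0 := f0) (minval f0 (childOf f0 β))
      linarith
    · have hco' : σ.card + 1 = β.card := by omega
      obtain ⟨χ, hχ, heβ⟩ := hPβ
      obtain ⟨hχK, a, ha⟩ := hχ
      have heβ' : β = insert a χ := by rw [heβ, parOf_eq hK hinj ha]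
      have hchβ : childOf f0 β = χ := by rw [heβ']; exact childOf_insert hK hinj hχK ha
      obtain ⟨x, hx, hxσ, heσ⟩ := face_rep hsub hco'
      have hσχ : σ ≠ χ := by
        intro h
        exact hnm ⟨h ▸ ⟨hχK, a, ha⟩, by rw [heβ, h]⟩
      have hxa : x ≠ a := by
        intro h
        apply hσχ
        rw [heσ, h, heβ', Finset.erase_insert ha.1]
      have haσ : a ∈ σ := by
        rw [heσ]
        exact Finset.mem_erase.2 ⟨fun h => hxa h.symm, heβ' ▸ Finset.mem_insert_self a χ⟩
      have hamin : ∀ y ∈ σ, f0 a ≤ f0 y := by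
        intro y hy
        have : y ∈ insert a χ := heβ' ▸ hsub.1 hy
        rcases Finset.mem_insert.1 this with h | h
        · exact le_of_eq (by rw [h])
        · exact le_of_lt (ha.2.2.2 y h)
      have hmvσ : minval f0 σ = f0 a := minval_eq hK hσ haσ hamin
      obtain ⟨v, hv, hev, _⟩ := minval_spec (f0 := f0) hK hχK
      have hlt : minval f0 σ < minval f0 χ := by
        rw [hmvσ, hev]; exact ha.2.2.2 v hv
      have hgap := uu_gap (K := K) (f0 := f0) (hmvσ ▸ f0_mem_vals hβ (heβ' ▸ hsub.1 haσ))
        (minval_mem_vals hK hχK) hlt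
      have hC : (β.card : ℝ) = (σ.card : ℝ) + 1 := by exact_mod_cast hco'.symm
      rw [hchβ, hC]
      linarith
  · rw [ww, ww, if_neg hPσ, if_neg hPβ]
    have h1 := uu_lt_one (K := K) (f0 := f0) (minval f0 σ)
    have h2 := uu_nonneg (K := K) (f0 := f0) (minval f0 β)
    linarith

lemma matched_facts (hK : IsComplex K) (hinj : Set.InjOn f0 {v : V | {v} ∈ K})
    {σ : Finset V} (h : IsChild K f0 σ) :
    parOf K f0 σ ∈ K ∧ σ ⊂ parOf K f0 σ ∧ (parOf K f0 σ).card = σ.card + 1 ∧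
      maxVal f0 (parOf K f0 σ) = maxVal f0 σ ∧
      ww K f0 (parOf K f0 σ) = ww K f0 σ - ss K f0 := by
  obtain ⟨hσK, a, ha⟩ := h
  have hpe : parOf K f0 σ = insert a σ := parOf_eq hK hinj ha
  have hβK : parOf K f0 σ ∈ K := hpe ▸ ha.2.1
  have hssub : σ ⊂ parOf K f0 σ := hpe ▸ Finset.ssubset_insert ha.1
  have hcard : (parOf K f0 σ).card = σ.card + 1 := by
    rw [hpe, Finset.card_insert_of_notMem ha.1]
  have hmax : maxVal f0 (parOf K f0 σ) = maxVal f0 σ := by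
    apply le_antisymm
    · obtain ⟨⟨m, hm, he⟩, _⟩ := maxVal_spec (f0 := f0) hK hβK
      rw [he]
      rcases Finset.mem_insert.1 (hpe ▸ hm) with h1 | h1
      · obtain ⟨y0, hy0⟩ := hK.1 σ hσK
        calc f0 m = f0 a := by rw [h1]
          _ ≤ f0 y0 := le_of_lt (ha.2.2.2 y0 hy0)
          _ ≤ maxVal f0 σ := (maxVal_spec hK hσK).2 y0 hy0
      · exact (maxVal_spec hK hσK).2 m h1
    · exact maxVal_mono hK hσK hβK hssub.1
  refine ⟨hβK, hssub, hcard, hmax, ?_⟩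
  have hPβ : IsParent K f0 (parOf K f0 σ) := ⟨σ, ⟨hσK, a, ha⟩, rfl⟩
  have hPσ : ¬ IsParent K f0 σ := child_not_parent hK hinj ⟨hσK, a, ha⟩
  have hch : childOf f0 (parOf K f0 σ) = σ := by
    rw [hpe]; exact childOf_insert hK hinj hσK ha
  rw [ww, ww, if_pos hPβ, if_neg hPσ, hch, hcard]
  push_cast
  ring

noncomputable def gapset (K : Finset (Finset V)) (f0 : V → ℝ) : Finset ℝ :=
  ((valsK K f0 ×ˢ valsK K f0).filter (fun p => p.1 < p.2)).image (fun p => p.2 - p.1)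

noncomputable def δ0 (K : Finset (Finset V)) (f0 : V → ℝ) : ℝ :=
  if h : (gapset K f0).Nonempty then (gapset K f0).min' h else 1

lemma δ0_pos : 0 < δ0 K f0 := by
  rw [δ0]
  split_ifs with h
  · obtain ⟨p, hp, he⟩ := Finset.mem_image.1 ((gapset K f0).min'_mem h)
    rw [← he]
    have := (Finset.mem_filter.1 hp).2
    linarith
  · exact one_pos

lemma δ0_le {x y : ℝ} (hx : x ∈ valsK K f0) (hy : y ∈ valsK K f0) (hxy : x < y) :
    x + δ0 K f0 ≤ y := by
  have hmem : y - x ∈ gapset K f0 :=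
    Finset.mem_image.2 ⟨(x, y), Finset.mem_filter.2 ⟨Finset.mem_product.2 ⟨hx, hy⟩, hxy⟩, rfl⟩
  have : δ0 K f0 ≤ y - x := by
    rw [δ0, dif_pos ⟨_, hmem⟩]
    exact Finset.min'_le _ _ hmem
  linarith

noncomputable def BB (K : Finset (Finset V)) (f0 : V → ℝ) : ℝ :=
  2 * ((K.biUnion id).card : ℝ) + 6

lemma BB_pos : 0 < BB K f0 := by
  rw [BB]; positivity

lemma ww_bound (hK : IsComplex K) {σ : Finset V} (hσ : σ ∈ K) :
    |ww K f0 σ - 2 - uu K f0 (maxVal f0 σ)| ≤ BB K f0 := by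
  have hcb : (σ.card : ℝ) ≤ ((K.biUnion id).card : ℝ) := by
    exact_mod_cast Finset.card_le_card (vert_subset hσ)
  have hc0 : (0:ℝ) ≤ (σ.card : ℝ) := Nat.cast_nonneg _
  have hs1 := ss_pos (K := K) (f0 := f0)
  have hs2 := ss_lt_one (K := K) (f0 := f0)
  have hu1 := uu_nonneg (K := K) (f0 := f0) (maxVal f0 σ)
  have hu2 := uu_lt_one (K := K) (f0 := f0) (maxVal f0 σ)
  rw [BB, abs_le]
  rw [ww]
  split_ifs with h
  · have h1 := uu_nonneg (K := K) (f0 := f0) (minval f0 (childOf f0 σ))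
    have h2 := uu_lt_one (K := K) (f0 := f0) (minval f0 (childOf f0 σ))
    constructor <;> linarith
  · have h1 := uu_nonneg (K := K) (f0 := f0) (minval f0 σ)
    have h2 := uu_lt_one (K := K) (f0 := f0) (minval f0 σ)
    constructor <;> linarith

noncomputable def ηv (K : Finset (Finset V)) (f0 : V → ℝ) (ε : ℝ) : ℝ :=
  min ε (δ0 K f0 / 2) / (BB K f0 + 1)

lemma ηv_pos {ε : ℝ} (hε : 0 < ε) : 0 < ηv K f0 ε := by
  have h1 := δ0_pos (K := K) (f0 := f0)
  have h2 := BB_pos (K := K) (f0 := f0)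
  apply div_pos (lt_min hε (by linarith)) (by linarith)

lemma ηv_mul_BB {ε : ℝ} (hε : 0 < ε) : ηv K f0 ε * BB K f0 < min ε (δ0 K f0 / 2) := by
  have h1 := δ0_pos (K := K) (f0 := f0)
  have h2 := BB_pos (K := K) (f0 := f0)
  have hmin : 0 < min ε (δ0 K f0 / 2) := lt_min hε (by linarith)
  rw [ηv, div_mul_eq_mul_div, div_lt_iff₀ (by linarith)]
  nlinarith

noncomputable def ff (K : Finset (Finset V)) (f0 : V → ℝ) (ε : ℝ) (σ : Finset V) : ℝ :=
  maxVal f0 σ + ηv K f0 ε * (ww K f0 σ - 2 - uu K f0 (maxVal f0 σ))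

lemma ff_lt (hK : IsComplex K) (hinj : Set.InjOn f0 {v : V | {v} ∈ K}) {ε : ℝ} (hε : 0 < ε)
    {σ β : Finset V} (hσ : σ ∈ K) (hβ : β ∈ K) (hsub : σ ⊂ β)
    (hnm : ¬(IsChild K f0 σ ∧ β = parOf K f0 σ)) : ff K f0 ε σ < ff K f0 ε β := by
  have hη := ηv_pos (K := K) (f0 := f0) (ε := ε) hε
  have hwlt := ww_lt hK hinj hσ hβ hsub hnm
  rcases eq_or_lt_of_le (maxVal_mono (f0 := f0) hK hσ hβ hsub.1) with he | hlt
  · rw [ff, ff, ← he]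
    nlinarith
  · have hgap := δ0_le (maxVal_mem_vals (f0 := f0) hK hσ) (maxVal_mem_vals (f0 := f0) hK hβ) hlt
    have hb1 := abs_le.1 (ww_bound (f0 := f0) hK hσ)
    have hb2 := abs_le.1 (ww_bound (f0 := f0) hK hβ)
    have hmb := ηv_mul_BB (K := K) (f0 := f0) hε
    have hmin : min ε (δ0 K f0 / 2) ≤ δ0 K f0 / 2 := min_le_right _ _
    rw [ff, ff]
    nlinarith [hb1.1, hb1.2, hb2.1, hb2.2]

lemma ff_matched (hK : IsComplex K) (hinj : Set.InjOn f0 {v : V | {v} ∈ K}) {ε : ℝ}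
    (hε : 0 < ε) {σ : Finset V} (h : IsChild K f0 σ) :
    ff K f0 ε (parOf K f0 σ) < ff K f0 ε σ := by
  obtain ⟨hβK, hssub, hcard, hmax, hwe⟩ := matched_facts hK hinj h
  have hη := ηv_pos (K := K) (f0 := f0) (ε := ε) hε
  have hs := ss_pos (K := K) (f0 := f0)
  rw [ff, ff, hmax, hwe]
  nlinarith

lemma ff_vertex (hK : IsComplex K) {ε : ℝ} {v : V} (hv : {v} ∈ K) :
    ff K f0 ε {v} = f0 v := by
  have hmax : maxVal f0 {v} = f0 v := by
    rw [maxVal, dif_pos ⟨v, Finset.mem_singleton_self v⟩, Finset.sup'_singleton]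
  have hnp : ¬ IsParent K f0 {v} := by
    rintro ⟨χ, ⟨hχK, hex⟩, he⟩
    rw [parOf, dif_pos hex] at he
    have h2 : hex.choose ∉ χ := hex.choose_spec.1
    have h3 : ({v} : Finset V).card = χ.card + 1 := by
      rw [he, Finset.card_insert_of_notMem h2]
    rw [Finset.card_singleton] at h3
    have h4 := Finset.card_pos.2 (hK.1 χ hχK)
    omega
  have hmin : minval f0 {v} = f0 v :=
    minval_eq hK hv (Finset.mem_singleton_self v) (fun y hy => by
      rw [Finset.mem_singleton.1 hy])
  rw [ff, ww, if_neg hnp, hmin, hmax, Finset.card_singleton]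
  ring

lemma ff_close (hK : IsComplex K) {ε : ℝ} (hε : 0 < ε) {σ : Finset V} (hσ : σ ∈ K) :
    |ff K f0 ε σ - maxVal f0 σ| ≤ ε := by
  have hη := ηv_pos (K := K) (f0 := f0) (ε := ε) hε
  have hb := ww_bound (f0 := f0) hK hσ
  have hmb := ηv_mul_BB (K := K) (f0 := f0) hε
  have hmin : min ε (δ0 K f0 / 2) ≤ ε := min_le_left _ _
  rw [ff, add_sub_cancel_left, abs_mul, abs_of_pos hη]
  calc ηv K f0 ε * |ww K f0 σ - 2 - uu K f0 (maxVal f0 σ)| ≤ ηv K f0 ε * BB K f0 := by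
        exact mul_le_mul_of_nonneg_left hb (le_of_lt hη)
    _ ≤ ε := le_trans (le_of_lt hmb) hmin

end Main

/-- There is a discrete Morse function `f` whose induced gradient vector
field is exactly the left-right pairs, which agrees with `f₀` on vertices, and which is
`ε`-close to the maximum vertex value on every simplex. -/
theorem stmt_8 {V : Type*} [DecidableEq V] (K : Finset (Finset V)) (f0 : V → ℝ)
    (hK : IsComplex K) (hinj : Set.InjOn f0 {v : V | {v} ∈ K})
    (ε : ℝ) (hε : 0 < ε) :
    ∃ f : Finset V → ℝ, IsDMF K f ∧
      (∀ σ ∈ K, ∀ τ ∈ K,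
        (σ ⊂ τ ∧ τ.card = σ.card + 1 ∧ f τ ≤ f σ) ↔
          (LeftRightParent K f0 τ ∧ σ = rchild K f0 τ)) ∧
      (∀ v : V, {v} ∈ K → f {v} = f0 v) ∧
      (∀ σ ∈ K, |f σ - maxVal f0 σ| ≤ ε) := by
  refine ⟨ff K f0 ε, ?_, ?_, ?_, ?_⟩
  · intro σ hσ
    constructor
    · rw [Finset.card_le_one]
      have key : ∀ β ∈ K.filter (fun β => σ ⊂ β ∧ ff K f0 ε β ≤ ff K f0 ε σ),
          β = parOf K f0 σ := by
        intro β hβ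
        have hβK := (Finset.mem_filter.1 hβ).1
        have hsub := (Finset.mem_filter.1 hβ).2.1
        have hle := (Finset.mem_filter.1 hβ).2.2
        by_cases hm : IsChild K f0 σ ∧ β = parOf K f0 σ
        · exact hm.2
        · exact absurd hle (not_le.2 (ff_lt hK hinj hε hσ hβK hsub hm))
      intro b1 h1 b2 h2
      rw [key b1 h1, key b2 h2]
    · rw [Finset.card_le_one]
      have key : ∀ γ ∈ K.filter (fun γ => γ ⊂ σ ∧ ff K f0 ε σ ≤ ff K f0 ε γ),
          γ = childOf f0 σ := by
        intro γ hγ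
        have hγK := (Finset.mem_filter.1 hγ).1
        have hsub := (Finset.mem_filter.1 hγ).2.1
        have hle := (Finset.mem_filter.1 hγ).2.2
        by_cases hm : IsChild K f0 γ ∧ σ = parOf K f0 γ
        · obtain ⟨⟨hγK', a, ha⟩, he⟩ := hm
          have : σ = insert a γ := by rw [he, parOf_eq hK hinj ha]
          rw [this, childOf_insert hK hinj hγK' ha]
        · exact absurd hle (not_le.2 (ff_lt hK hinj hε hγK hσ hsub hm))
      intro b1 h1 b2 h2
      rw [key b1 h1, key b2 h2]
  · intro σ hσ τ hτ
    constructor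
    · rintro ⟨hsub, hcard, hle⟩
      by_cases hm : IsChild K f0 σ ∧ τ = parOf K f0 σ
      · exact (bridge hK hinj hσ hτ).2 hm
      · exact absurd hle (not_le.2 (ff_lt hK hinj hε hσ hτ hsub hm))
    · intro h
      have hm := (bridge hK hinj hσ hτ).1 h
      obtain ⟨hβK, hssub, hcard, _, _⟩ := matched_facts hK hinj hm.1
      rw [← hm.2] at hssub hcard
      exact ⟨hssub, hcard, le_of_lt (by rw [hm.2]; exact ff_matched hK hinj hε hm.1)⟩
  · intro v hv
    exact ff_vertex hK hv
  · intro σ hσ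
    exact ff_close hK hε hσ
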